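/- Let Γ be a subgroup of O⁺(1,n) such that ‖A − I‖ ≥ c for all A ∈ Γ with A ≠ I, where c > 0. Then for every r > 0, the set H(r,Γ) = {A ∈ Γ : A(B̄(e₁,r)) ∩ B̄(e₁,r) ≠ ∅} is finite with |H(r,Γ)| ≤ (2κ(r)²(n+1)²/c + 1)^{(n+1)²}, where κ(r) = ((1+cosh r)/sinh r)√(cosh 6r). -/

import Mathlib

open Matrix

noncomputable def opNorm {m : Type*} [Fintype m] [DecidableEq m]
    (A : Matrix m m ℝ) : ℝ :=
  ‖(LinearMap.toContinuousLinearMap (Matrix.toEuclideanLin A))‖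

/-- The Lorentz form matrix `J = diag(-1, 1, …, 1)`. -/
noncomputable def Jmat (n : ℕ) : Matrix (Fin (n+1)) (Fin (n+1)) ℝ :=
  Matrix.diagonal fun i => if i = 0 then (-1 : ℝ) else 1

/-- `A ∈ O⁺(1,n)`: `A` preserves the Lorentz form and the upper sheet. -/
def OPlus {n : ℕ} (A : Matrix (Fin (n+1)) (Fin (n+1)) ℝ) : Prop :=
  Aᵀ * Jmat n * A = Jmat n ∧ 1 ≤ A 0 0

/-- The Lorentzian pairing `x₁y₁ − x₂y₂ − ⋯ − x_{n+1}y_{n+1}`. -/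
noncomputable def lprod {n : ℕ} (x y : Fin (n+1) → ℝ) : ℝ :=
  x 0 * y 0 - ∑ i ∈ Finset.univ.erase 0, x i * y i

/-- Membership in the hyperboloid model `H^n` (upper sheet). -/
def onH {n : ℕ} (x : Fin (n+1) → ℝ) : Prop :=
  lprod x x = 1 ∧ 0 < x 0

/-- Inverse hyperbolic cosine. -/
noncomputable def arcosh (x : ℝ) : ℝ := Real.log (x + Real.sqrt (x ^ 2 - 1))

/-- Hyperbolic distance on the hyperboloid: `cosh (dH x y) = lprod x y`. -/
noncomputable def dH {n : ℕ} (x y : Fin (n+1) → ℝ) : ℝ := arcosh (lprod x y)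

/-- The point `e₁ = (1, 0, …, 0)` of the hyperboloid. -/
noncomputable def e1vec (n : ℕ) : Fin (n+1) → ℝ := fun i => if i = 0 then 1 else 0

/-- The closed hyperbolic ball of radius `r` about `e₁` in the hyperboloid. -/
noncomputable def hBall (n : ℕ) (r : ℝ) : Set (Fin (n+1) → ℝ) :=
  {x | onH x ∧ dH (e1vec n) x ≤ r}

/-- `κ(r) = ((1 + cosh r)/sinh r) √(cosh 6r)`. -/
noncomputable def kappa (r : ℝ) : ℝ :=
  ((1 + Real.cosh r) / Real.sinh r) * Real.sqrt (Real.cosh (6 * r))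

/-! ### Auxiliary lemmas -/

section Aux

variable {n : ℕ}

lemma lprod_comm (x y : Fin (n+1) → ℝ) : lprod x y = lprod y x := by
  simp [lprod, mul_comm]

lemma lprod_eq_sum (x y : Fin (n+1) → ℝ) :
    lprod x y = ∑ i, (if i = 0 then (1:ℝ) else -1) * x i * y i := by
  rw [← Finset.sum_erase_add _ _ (Finset.mem_univ (0 : Fin (n+1)))]
  have : ∀ i ∈ Finset.univ.erase (0 : Fin (n+1)),
      (if i = 0 then (1:ℝ) else -1) * x i * y i = -(x i * y i) := fun i hi => by
    rw [if_neg (Finset.mem_erase.mp hi).1]; ring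
  rw [Finset.sum_congr rfl this, Finset.sum_neg_distrib]
  simp [lprod]; ring

lemma lprod_eq_dot (x y : Fin (n+1) → ℝ) :
    lprod x y = x ⬝ᵥ ((-(Jmat n)) *ᵥ y) := by
  rw [lprod_eq_sum]
  simp only [Jmat, dotProduct, neg_mulVec, Pi.neg_apply, mulVec_diagonal]
  exact Finset.sum_congr rfl fun i _ => by by_cases h : i = 0 <;> simp [h] <;> ring

lemma Jmat_mul_Jmat : (Jmat n) * Jmat n = 1 := by
  rw [Jmat, diagonal_mul_diagonal]
  ext i j
  by_cases h : i = j <;> by_cases h0 : i = 0 <;>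
    simp [diagonal, Matrix.one_apply, h, h0] <;> simp [← h, h0]

lemma lprod_mulVec {A : Matrix (Fin (n+1)) (Fin (n+1)) ℝ}
    (hA : Aᵀ * Jmat n * A = Jmat n) (x y : Fin (n+1) → ℝ) :
    lprod (A *ᵥ x) (A *ᵥ y) = lprod x y := by
  have key : Aᵀ * (-(Jmat n) * A) = -(Jmat n) := by
    rw [neg_mul, Matrix.mul_neg, ← Matrix.mul_assoc, hA]
  rw [lprod_eq_dot, lprod_eq_dot, mulVec_mulVec, dotProduct_mulVec,
    ← vecMul_transpose, vecMul_vecMul, key, ← dotProduct_mulVec]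

lemma OPlus_left_inv {A : Matrix (Fin (n+1)) (Fin (n+1)) ℝ}
    (hA : Aᵀ * Jmat n * A = Jmat n) :
    (Jmat n * Aᵀ * Jmat n) * A = 1 := by
  calc (Jmat n * Aᵀ * Jmat n) * A = Jmat n * (Aᵀ * Jmat n * A) := by
        simp only [Matrix.mul_assoc]
  _ = 1 := by rw [hA, Jmat_mul_Jmat]

lemma OPlus_right_inv {A : Matrix (Fin (n+1)) (Fin (n+1)) ℝ}
    (hA : Aᵀ * Jmat n * A = Jmat n) :
    A * (Jmat n * Aᵀ * Jmat n) = 1 :=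
  mul_eq_one_comm.mp (OPlus_left_inv hA)

lemma OPlus_inv_eq {A : Matrix (Fin (n+1)) (Fin (n+1)) ℝ}
    (hA : Aᵀ * Jmat n * A = Jmat n) :
    A⁻¹ = Jmat n * Aᵀ * Jmat n :=
  Matrix.inv_eq_left_inv (OPlus_left_inv hA)

lemma OPlus_row_identity {A : Matrix (Fin (n+1)) (Fin (n+1)) ℝ}
    (hA : Aᵀ * Jmat n * A = Jmat n) :
    A * Jmat n * Aᵀ = Jmat n := by
  have h1 : A * Jmat n * Aᵀ * Jmat n = 1 := by
    rw [← OPlus_right_inv hA]; simp only [Matrix.mul_assoc]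
  calc A * Jmat n * Aᵀ = (A * Jmat n * Aᵀ * Jmat n) * Jmat n := by
        rw [Matrix.mul_assoc (A * Jmat n * Aᵀ), Jmat_mul_Jmat, Matrix.mul_one]
  _ = Jmat n := by rw [h1, Matrix.one_mul]

noncomputable def bvec (n : ℕ) (j : Fin (n+1)) : Fin (n+1) → ℝ :=
  fun k => if k = j then 1 else 0

lemma mulVec_bvec (A : Matrix (Fin (n+1)) (Fin (n+1)) ℝ) (j : Fin (n+1)) :
    A *ᵥ bvec n j = fun i => A i j := by
  funext i
  simp [bvec, mulVec, dotProduct]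

lemma lprod_bvec_self (j : Fin (n+1)) :
    lprod (bvec n j) (bvec n j) = if j = 0 then 1 else -1 := by
  unfold lprod bvec
  by_cases h : j = 0
  · subst h
    rw [if_pos rfl, Finset.sum_eq_zero (fun i hi => by
      rw [if_neg (Finset.mem_erase.mp hi).1, zero_mul])]
    norm_num
  · rw [if_neg (fun hh : (0 : Fin (n+1)) = j => h hh.symm), zero_mul, if_neg h,
      Finset.sum_eq_single_of_mem j
        (Finset.mem_erase.mpr ⟨h, Finset.mem_univ j⟩)
        (fun b _ hb => by rw [if_neg hb, zero_mul])]
    rw [if_pos rfl]; ring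

lemma lprod_col {A : Matrix (Fin (n+1)) (Fin (n+1)) ℝ}
    (hA : Aᵀ * Jmat n * A = Jmat n) (j : Fin (n+1)) :
    A 0 j * A 0 j - ∑ i ∈ Finset.univ.erase 0, A i j * A i j
      = if j = 0 then 1 else -1 := by
  have := lprod_mulVec hA (bvec n j) (bvec n j)
  rw [mulVec_bvec, lprod_bvec_self] at this
  simpa [lprod] using this

lemma lprod_row {A : Matrix (Fin (n+1)) (Fin (n+1)) ℝ}
    (hA : Aᵀ * Jmat n * A = Jmat n) (i : Fin (n+1)) :
    A i 0 * A i 0 - ∑ j ∈ Finset.univ.erase 0, A i j * A i j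
      = if i = 0 then 1 else -1 := by
  have hAT : (Aᵀ)ᵀ * Jmat n * Aᵀ = Jmat n := by
    rw [transpose_transpose]; exact OPlus_row_identity hA
  simpa using lprod_col hAT i

lemma absle_aux (a b : ℝ) (h : a * a ≤ b * b) (hb : 0 ≤ b) : |a| ≤ b := by
  rw [abs_le]; constructor <;> nlinarith [sq_nonneg (a + b), sq_nonneg (a - b)]

lemma entry_bound {A : Matrix (Fin (n+1)) (Fin (n+1)) ℝ}
    (hA : Aᵀ * Jmat n * A = Jmat n) (h00 : 1 ≤ A 0 0) (i j : Fin (n+1)) :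
    |A i j| ≤ A 0 0 := by
  have hrow0 : ∑ j ∈ Finset.univ.erase 0, A 0 j * A 0 j = A 0 0 * A 0 0 - 1 := by
    have := lprod_row hA 0; rw [if_pos rfl] at this; linarith
  have hterm_row : ∀ j ∈ (Finset.univ.erase (0 : Fin (n+1))),
      A 0 j * A 0 j ≤ A 0 0 * A 0 0 - 1 := by
    intro j hj
    rw [← hrow0]
    exact Finset.single_le_sum (fun k _ => mul_self_nonneg (A 0 k)) hj
  apply absle_aux _ _ _ (by linarith)
  by_cases hi : i = 0
  · subst hi
    by_cases hj : j = 0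
    · subst hj; exact le_refl _
    · have := hterm_row j (Finset.mem_erase.mpr ⟨hj, Finset.mem_univ j⟩)
      linarith
  · have hcolj := lprod_col hA j
    have hterm : A i j * A i j ≤ ∑ k ∈ Finset.univ.erase 0, A k j * A k j :=
      Finset.single_le_sum (fun k _ => mul_self_nonneg (A k j))
        (Finset.mem_erase.mpr ⟨hi, Finset.mem_univ i⟩)
    by_cases hj : j = 0
    · subst hj; rw [if_pos rfl] at hcolj; nlinarith
    · rw [if_neg hj] at hcolj
      have := hterm_row j (Finset.mem_erase.mpr ⟨hj, Finset.mem_univ j⟩)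
      nlinarith

lemma lprod_sub_smul_left (x v w : Fin (n+1) → ℝ) (a : ℝ) :
    lprod (x - a • v) w = lprod x w - a * lprod v w := by
  simp only [lprod, Pi.sub_apply, Pi.smul_apply, smul_eq_mul]
  rw [Finset.sum_congr rfl (fun i _ => by ring :
    ∀ i ∈ Finset.univ.erase (0:Fin (n+1)),
      (x i - a * v i) * w i = x i * w i - a * (v i * w i))]
  rw [Finset.sum_sub_distrib, ← Finset.mul_sum]
  ring

lemma lprod_sub_smul_right (w x v : Fin (n+1) → ℝ) (a : ℝ) :
    lprod w (x - a • v) = lprod w x - a * lprod w v := by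
  rw [lprod_comm, lprod_sub_smul_left, lprod_comm x w, lprod_comm v w]

lemma one_le_x0 {x : Fin (n+1) → ℝ} (hx : onH x) : 1 ≤ x 0 := by
  obtain ⟨h1, h2⟩ := hx
  have hS : 0 ≤ ∑ i ∈ Finset.univ.erase 0, x i * x i :=
    Finset.sum_nonneg fun i _ => mul_self_nonneg _
  rw [lprod] at h1
  nlinarith

lemma one_le_lprod {x y : Fin (n+1) → ℝ} (hx : onH x) (hy : onH y) :
    1 ≤ lprod x y := by
  have hx0 := one_le_x0 hx
  have hy0 := one_le_x0 hy
  have hX : x 0 * x 0 - ∑ i ∈ Finset.univ.erase 0, x i * x i = 1 := hx.1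
  have hY : y 0 * y 0 - ∑ i ∈ Finset.univ.erase 0, y i * y i = 1 := hy.1
  have hCS := Finset.sum_mul_sq_le_sq_mul_sq (Finset.univ.erase (0:Fin (n+1))) x y
  have ex : ∑ i ∈ Finset.univ.erase (0:Fin (n+1)), x i ^ 2
      = ∑ i ∈ Finset.univ.erase (0:Fin (n+1)), x i * x i :=
    Finset.sum_congr rfl (fun i _ => pow_two (x i))
  have ey : ∑ i ∈ Finset.univ.erase (0:Fin (n+1)), y i ^ 2
      = ∑ i ∈ Finset.univ.erase (0:Fin (n+1)), y i * y i :=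
    Finset.sum_congr rfl (fun i _ => pow_two (y i))
  rw [ex, ey] at hCS
  have hc : (1:ℝ) ≤ x 0 * y 0 := by nlinarith
  rw [lprod]
  nlinarith [hCS, sq_nonneg (x 0 - y 0), hc]

lemma ortho_nonpos {v w : Fin (n+1) → ℝ} (hv : onH v) (hw : lprod w v = 0) :
    lprod w w ≤ 0 := by
  have hv0 := one_le_x0 hv
  have hV : v 0 * v 0 - ∑ i ∈ Finset.univ.erase 0, v i * v i = 1 := hv.1
  have hT : w 0 * v 0 - ∑ i ∈ Finset.univ.erase 0, w i * v i = 0 := hw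
  have hCS := Finset.sum_mul_sq_le_sq_mul_sq (Finset.univ.erase (0:Fin (n+1))) w v
  have ew : ∑ i ∈ Finset.univ.erase (0:Fin (n+1)), w i ^ 2
      = ∑ i ∈ Finset.univ.erase (0:Fin (n+1)), w i * w i :=
    Finset.sum_congr rfl (fun i _ => pow_two (w i))
  have ev : ∑ i ∈ Finset.univ.erase (0:Fin (n+1)), v i ^ 2
      = ∑ i ∈ Finset.univ.erase (0:Fin (n+1)), v i * v i :=
    Finset.sum_congr rfl (fun i _ => pow_two (v i))
  rw [ew, ev] at hCS
  have hW : 0 ≤ ∑ i ∈ Finset.univ.erase (0:Fin (n+1)), w i * w i :=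
    Finset.sum_nonneg fun i _ => mul_self_nonneg _
  have hT2 : (∑ i ∈ Finset.univ.erase (0:Fin (n+1)), w i * v i) = w 0 * v 0 := by
    linarith
  rw [hT2] at hCS
  have hvv : (1:ℝ) ≤ v 0 * v 0 := by nlinarith
  rw [lprod]
  nlinarith [hCS, hW, hvv]

lemma disc_aux (P Q R : ℝ) (h : ∀ t : ℝ, P + 2*t*R + t^2*Q ≤ 0) :
    R^2 ≤ P*Q := by
  have hQ : Q ≤ 0 := by
    by_contra hq
    push_neg at hq
    set t := max 1 ((|P| + 2*|R| + 1)/Q) with ht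
    have ht1 : (1:ℝ) ≤ t := le_max_left _ _
    have ht2 : (|P| + 2*|R| + 1)/Q ≤ t := le_max_right _ _
    have htQ : |P| + 2*|R| + 1 ≤ t * Q := by
      rw [div_le_iff₀ hq] at ht2; linarith
    have h0 := h t
    nlinarith [le_abs_self P, neg_abs_le P, le_abs_self R, neg_abs_le R,
      abs_nonneg P, abs_nonneg R, mul_le_mul_of_nonneg_left htQ (by linarith : (0:ℝ) ≤ t)]
  rcases lt_or_eq_of_le hQ with hQlt | hQeq
  · have hQ0 : Q ≠ 0 := ne_of_lt hQlt
    have h2 := h (-R/Q)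
    have h3 : 0 ≤ Q * (P + 2*(-R/Q)*R + (-R/Q)^2*Q) := by
      rw [← neg_mul_neg]
      exact mul_nonneg (by linarith) (by linarith)
    have e : Q * (P + 2*(-R/Q)*R + (-R/Q)^2*Q) = P*Q - R^2 := by
      field_simp
      ring
    rw [e] at h3
    linarith
  · subst hQeq
    have hR : R = 0 := by
      by_contra hR
      have h1 := h ((1 - P)/(2*R))
      have e : P + 2*((1 - P)/(2*R))*R + ((1 - P)/(2*R))^2*0 = 1 := by
        field_simp
        ring
      rw [e] at h1
      linarith
    rw [hR]
    norm_num

lemma rev_CS {y z v : Fin (n+1) → ℝ} (hy : onH y) (hz : onH z) (hv : onH v) :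
    lprod y z ≤ lprod y v * lprod v z
      + Real.sqrt ((lprod y v)^2 - 1) * Real.sqrt ((lprod v z)^2 - 1) := by
  set a := lprod y v with ha'
  set b := lprod v z with hb'
  have ha : 1 ≤ a := one_le_lprod hy hv
  have hb : 1 ≤ b := by rw [hb', lprod_comm]; exact one_le_lprod hz hv
  obtain ⟨p, hp'⟩ : ∃ p, p = y - a • v := ⟨_, rfl⟩
  obtain ⟨q, hq'⟩ : ∃ q, q = z - b • v := ⟨_, rfl⟩
  have hvv : lprod v v = 1 := hv.1
  have hpv : lprod p v = 0 := by
    rw [hp', lprod_sub_smul_left, hvv, ← ha']; ring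
  have hqv : lprod q v = 0 := by
    rw [hq', lprod_sub_smul_left, hvv, lprod_comm z v, ← hb']; ring
  have hpp : lprod p p = 1 - a^2 := by
    rw [hp', lprod_sub_smul_right, lprod_sub_smul_left, lprod_sub_smul_left,
      hvv, hy.1, lprod_comm v y, ← ha']
    ring
  have hqq : lprod q q = 1 - b^2 := by
    rw [hq', lprod_sub_smul_right, lprod_sub_smul_left, lprod_sub_smul_left,
      hvv, hz.1, lprod_comm z v, ← hb']
    ring
  have hpq : lprod p q = lprod y z - a * b := by
    rw [hp', hq', lprod_sub_smul_right, lprod_sub_smul_left, lprod_sub_smul_left,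
      hvv, ← ha', ← hb']
    ring
  have hdisc : (lprod p q)^2 ≤ (lprod p p) * (lprod q q) := by
    apply disc_aux
    intro t
    have hexp : lprod (p - (-t) • q) (p - (-t) • q)
        = lprod p p + 2*t*(lprod p q) + t^2 * lprod q q := by
      rw [lprod_sub_smul_right, lprod_sub_smul_left, lprod_sub_smul_left,
        lprod_comm q p]
      ring
    rw [← hexp]
    apply ortho_nonpos hv
    rw [lprod_sub_smul_left, hpv, hqv]
    ring
  rw [hpp, hqq] at hdisc
  have h1 : lprod p q ≤ Real.sqrt ((a^2-1)*(b^2-1)) := by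
    have h0 : (lprod p q)^2 ≤ (a^2-1)*(b^2-1) := by nlinarith [hdisc]
    calc lprod p q ≤ |lprod p q| := le_abs_self _
    _ = Real.sqrt ((lprod p q)^2) := (Real.sqrt_sq_eq_abs _).symm
    _ ≤ Real.sqrt ((a^2-1)*(b^2-1)) := Real.sqrt_le_sqrt h0
  rw [Real.sqrt_mul (by nlinarith : (0:ℝ) ≤ a^2 - 1)] at h1
  linarith [h1, hpq]

lemma le_cosh_of_arcosh_le {t r : ℝ} (ht : 1 ≤ t) (h : arcosh t ≤ r) :
    t ≤ Real.cosh r := by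
  have h1 : 0 ≤ t^2 - 1 := by nlinarith
  have hs : Real.sqrt (t^2-1) * Real.sqrt (t^2-1) = t^2 - 1 :=
    Real.mul_self_sqrt h1
  have hspos : 0 < t + Real.sqrt (t^2 - 1) := by
    have := Real.sqrt_nonneg (t^2-1); linarith
  have hprod : (t + Real.sqrt (t^2-1)) * (t - Real.sqrt (t^2-1)) = 1 := by
    nlinarith [hs]
  have hinv : (t + Real.sqrt (t^2-1))⁻¹ = t - Real.sqrt (t^2-1) :=
    inv_eq_of_mul_eq_one_right hprod
  have hcosh : Real.cosh (arcosh t) = t := by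
    rw [arcosh, Real.cosh_log hspos, hinv]
    ring
  have harc0 : 0 ≤ arcosh t := by
    rw [arcosh]
    apply Real.log_nonneg
    have := Real.sqrt_nonneg (t^2-1); linarith
  calc t = Real.cosh (arcosh t) := hcosh.symm
  _ ≤ Real.cosh r := by
    rw [Real.cosh_le_cosh, abs_of_nonneg harc0, abs_of_nonneg (le_trans harc0 h)]
    exact h

lemma kappa_pos {r : ℝ} (hr : 0 < r) : 0 < kappa r := by
  have hsinh : 0 < Real.sinh r := Real.sinh_pos_iff.mpr hr
  have h6 : (0:ℝ) < Real.cosh (6*r) := Real.cosh_pos (6*r)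
  apply mul_pos
  · apply div_pos _ hsinh
    have := Real.cosh_pos r; linarith
  · exact Real.sqrt_pos.mpr h6

lemma cosh_sq_le (r : ℝ) (hr : 0 < r) : Real.cosh (2*r) ^2 ≤ Real.cosh (6*r) := by
  have h4 : Real.cosh (2*(2*r)) = 2 * Real.cosh (2*r)^2 - 1 := by
    rw [Real.cosh_two_mul, Real.sinh_sq]; ring
  have h46 : Real.cosh (4*r) ≤ Real.cosh (6*r) := by
    rw [Real.cosh_le_cosh, abs_of_nonneg (by linarith), abs_of_nonneg (by linarith)]
    linarith
  have hc1 : 1 ≤ Real.cosh (4*r) := Real.one_le_cosh _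
  have : Real.cosh (4*r) = 2*Real.cosh (2*r)^2 - 1 := by
    rw [show (4:ℝ)*r = 2*(2*r) by ring] at *
    exact h4
  nlinarith

lemma cosh_two_le_kappa {r : ℝ} (hr : 0 < r) : Real.cosh (2*r) ≤ kappa r := by
  have hsinh : 0 < Real.sinh r := Real.sinh_pos_iff.mpr hr
  have h1 : (1:ℝ) ≤ (1 + Real.cosh r) / Real.sinh r := by
    rw [le_div_iff₀ hsinh]
    have := Real.sinh_lt_cosh (x := r)
    linarith
  have h2 : Real.cosh (2*r) ≤ Real.sqrt (Real.cosh (6*r)) := by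
    rw [Real.le_sqrt (le_of_lt (Real.cosh_pos _)) (le_of_lt (Real.cosh_pos _))]
    exact cosh_sq_le r hr
  calc Real.cosh (2*r) ≤ 1 * Real.sqrt (Real.cosh (6*r)) := by rw [one_mul]; exact h2
  _ ≤ kappa r := mul_le_mul_of_nonneg_right h1 (Real.sqrt_nonneg _)

end Aux

section OpNormAux

open scoped Matrix.Norms.L2Operator

lemma opNorm_eq {m : Type*} [Fintype m] [DecidableEq m] (A : Matrix m m ℝ) :
    opNorm A = ‖A‖ := rfl

lemma opNorm_mul_le {m : Type*} [Fintype m] [DecidableEq m] (A B : Matrix m m ℝ) :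
    opNorm (A * B) ≤ opNorm A * opNorm B := by
  rw [opNorm_eq, opNorm_eq, opNorm_eq]
  exact Matrix.l2_opNorm_mul A B

lemma opNorm_le_of_entry_le {ι : Type*} [Fintype ι] [DecidableEq ι] [Nonempty ι]
    (A : Matrix ι ι ℝ) (m : ℝ) (hm : 0 ≤ m) (h : ∀ i j, |A i j| ≤ m) :
    opNorm A ≤ (Fintype.card ι) * m := by
  apply ContinuousLinearMap.opNorm_le_bound _ (by positivity)
  intro v
  have happ : ∀ i, (LinearMap.toContinuousLinearMap (Matrix.toEuclideanLin A) v) i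
      = ∑ j, A i j * v j := by
    intro i
    simp [Matrix.toEuclideanLin_apply, Matrix.mulVec, dotProduct]
  rw [EuclideanSpace.norm_eq]
  have hv : ‖v‖ = Real.sqrt (∑ j, (v j)^2) := by
    rw [EuclideanSpace.norm_eq]
    congr 1
    exact Finset.sum_congr rfl fun j _ => by rw [Real.norm_eq_abs, sq_abs]
  rw [hv, ← Real.sqrt_sq (by positivity : (0:ℝ) ≤ (Fintype.card ι : ℝ) * m),
    ← Real.sqrt_mul (by positivity)]
  apply Real.sqrt_le_sqrt
  have hvnn : (0:ℝ) ≤ ∑ j, (v j)^2 := Finset.sum_nonneg fun j _ => sq_nonneg _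
  have hrow : ∀ i : ι, (∑ j, A i j * v j)^2
      ≤ ((Fintype.card ι) * m^2) * ∑ j, (v j)^2 := by
    intro i
    have hCS := Finset.sum_mul_sq_le_sq_mul_sq Finset.univ (fun j => A i j) v
    have hA1 : ∀ j : ι, (A i j)^2 ≤ m^2 := by
      intro j
      rw [← sq_abs]
      exact pow_le_pow_left₀ (abs_nonneg _) (h i j) 2
    have hA2 : ∑ j, (A i j)^2 ≤ (Fintype.card ι) * m^2 := by
      have := Finset.sum_le_sum (fun j (_ : j ∈ Finset.univ) => hA1 j)
      rwa [Finset.sum_const, Finset.card_univ, nsmul_eq_mul] at this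
    have := mul_le_mul_of_nonneg_right hA2 hvnn
    exact le_trans hCS this
  have hsum := Finset.sum_le_sum (fun i (_ : i ∈ Finset.univ) => hrow i)
  rw [Finset.sum_const, Finset.card_univ, nsmul_eq_mul] at hsum
  have heq : ∑ i, ‖(LinearMap.toContinuousLinearMap (Matrix.toEuclideanLin A) v) i‖^2
      = ∑ i, (∑ j, A i j * v j)^2 :=
    Finset.sum_congr rfl fun i _ => by rw [happ, Real.norm_eq_abs, sq_abs]
  rw [heq]
  calc ∑ i, (∑ j, A i j * v j)^2
      ≤ (Fintype.card ι : ℝ) * (((Fintype.card ι) * m^2) * ∑ j, (v j)^2) := hsum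
  _ = ((Fintype.card ι : ℝ) * m)^2 * ∑ j, (v j)^2 := by ring

end OpNormAux

theorem stmt_15 (n : ℕ) (c : ℝ) (hc : 0 < c)
    (Γ : Set (Matrix (Fin (n+1)) (Fin (n+1)) ℝ))
    (hsub : ∀ A ∈ Γ, OPlus A)
    (hmul : ∀ A ∈ Γ, ∀ B ∈ Γ, A * B ∈ Γ)
    (hinv : ∀ A ∈ Γ, A⁻¹ ∈ Γ)
    (hsep : ∀ A ∈ Γ, A ≠ 1 → c ≤ opNorm (A - 1))
    (r : ℝ) (hr : 0 < r) :
    letI H : Set (Matrix (Fin (n+1)) (Fin (n+1)) ℝ) :=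
      {A ∈ Γ | ∃ x ∈ hBall n r, A.mulVec x ∈ hBall n r}
    H.Finite ∧
      (Nat.card H : ℝ) ≤
        (2 * kappa r ^ 2 * (n + 1) ^ 2 / c + 1) ^ ((n + 1) ^ 2) := by
  set H : Set (Matrix (Fin (n+1)) (Fin (n+1)) ℝ) :=
    {A | A ∈ Γ ∧ ∃ x ∈ hBall n r, A *ᵥ x ∈ hBall n r} with hHdef
  set κ := kappa r with hκdef
  have hκ : 0 < κ := kappa_pos hr
  set δ : ℝ := c / ((n+1:ℝ)^2 * κ) with hδdef
  have hδ : 0 < δ := div_pos hc (by positivity)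
  -- onH e1
  have he1 : onH (e1vec n) := by
    constructor
    · have := lprod_bvec_self (n := n) 0
      rw [if_pos rfl] at this
      exact this
    · simp [e1vec]
  -- Step 1 : entry bounds
  have hentry : ∀ A ∈ H, ∀ i j, |A i j| ≤ κ := by
    rintro A ⟨hAΓ, x, hx, hAx⟩ i j
    have hop := hsub A hAΓ
    have h00 : 1 ≤ A 0 0 := hop.2
    have hxH : onH x := hx.1
    have hAxH : onH (A *ᵥ x) := hAx.1
    have hAe1H : onH (A *ᵥ e1vec n) := by
      constructor
      · rw [lprod_mulVec hop.1]
        exact he1.1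
      · have : (A *ᵥ e1vec n) 0 = A 0 0 := by
          rw [show e1vec n = bvec n 0 from rfl, mulVec_bvec]
        rw [this]; linarith
    have ha1 : 1 ≤ lprod (e1vec n) (A *ᵥ x) := one_le_lprod he1 hAxH
    have har : lprod (e1vec n) (A *ᵥ x) ≤ Real.cosh r :=
      le_cosh_of_arcosh_le ha1 hAx.2
    have hbval : lprod (A *ᵥ x) (A *ᵥ e1vec n) = lprod (e1vec n) x := by
      rw [lprod_mulVec hop.1, lprod_comm]
    have hb1 : 1 ≤ lprod (A *ᵥ x) (A *ᵥ e1vec n) := by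
      rw [hbval]; exact one_le_lprod he1 hxH
    have hbr : lprod (A *ᵥ x) (A *ᵥ e1vec n) ≤ Real.cosh r := by
      rw [hbval]
      exact le_cosh_of_arcosh_le (one_le_lprod he1 hxH) hx.2
    have hA00val : lprod (e1vec n) (A *ᵥ e1vec n) = A 0 0 := by
      rw [show e1vec n = bvec n 0 from rfl, mulVec_bvec]
      have hz : ∑ i ∈ Finset.univ.erase (0:Fin (n+1)), bvec n 0 i * A i 0 = 0 :=
        Finset.sum_eq_zero fun i hi => by
          rw [show bvec n 0 i = 0 from if_neg (Finset.mem_erase.mp hi).1, zero_mul]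
      rw [lprod, hz]
      simp [bvec]
    have hrev := rev_CS he1 hAe1H hAxH
    set a := lprod (e1vec n) (A *ᵥ x)
    set b := lprod (A *ᵥ x) (A *ᵥ e1vec n)
    have hsinh : 0 < Real.sinh r := Real.sinh_pos_iff.mpr hr
    have hsq1 : Real.sqrt (a^2 - 1) ≤ Real.sinh r := by
      have h0 : a^2 - 1 ≤ Real.sinh r ^ 2 := by
        have := Real.cosh_sq r; nlinarith
      calc Real.sqrt (a^2-1) ≤ Real.sqrt (Real.sinh r ^2) := Real.sqrt_le_sqrt h0
      _ = Real.sinh r := by rw [Real.sqrt_sq (le_of_lt hsinh)]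
    have hsq2 : Real.sqrt (b^2 - 1) ≤ Real.sinh r := by
      have h0 : b^2 - 1 ≤ Real.sinh r ^ 2 := by
        have := Real.cosh_sq r; nlinarith
      calc Real.sqrt (b^2-1) ≤ Real.sqrt (Real.sinh r ^2) := Real.sqrt_le_sqrt h0
      _ = Real.sinh r := by rw [Real.sqrt_sq (le_of_lt hsinh)]
    have hab : a * b ≤ Real.cosh r * Real.cosh r :=
      mul_le_mul har hbr (by linarith) (le_of_lt (Real.cosh_pos r))
    have hsqs : Real.sqrt (a^2-1) * Real.sqrt (b^2-1) ≤ Real.sinh r * Real.sinh r :=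
      mul_le_mul hsq1 hsq2 (Real.sqrt_nonneg _) (le_of_lt hsinh)
    have hA00 : A 0 0 ≤ Real.cosh (2*r) := by
      rw [← hA00val]
      calc lprod (e1vec n) (A *ᵥ e1vec n)
          ≤ a * b + Real.sqrt (a^2-1) * Real.sqrt (b^2-1) := hrev
      _ ≤ Real.cosh r * Real.cosh r + Real.sinh r * Real.sinh r := by linarith
      _ = Real.cosh (2*r) := by rw [Real.cosh_two_mul]; ring
    calc |A i j| ≤ A 0 0 := entry_bound hop.1 h00 i j
    _ ≤ Real.cosh (2*r) := hA00
    _ ≤ κ := cosh_two_le_kappa hr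
  -- entry bound for inverses
  have hinvent : ∀ B ∈ H, ∀ i j, |(B⁻¹ : Matrix (Fin (n+1)) (Fin (n+1)) ℝ) i j| ≤ κ := by
    intro B hB i j
    have hop := hsub B hB.1
    rw [OPlus_inv_eq hop.1]
    have e : (Jmat n * Bᵀ * Jmat n) i j
        = ((if i = 0 then (-1:ℝ) else 1)) * B j i * ((if j = 0 then (-1:ℝ) else 1)) := by
      rw [Jmat, Matrix.mul_diagonal, Matrix.diagonal_mul, Matrix.transpose_apply]
    rw [e, abs_mul, abs_mul]
    have h1 : |(if i = 0 then (-1:ℝ) else 1)| = 1 := by split <;> simp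
    have h2 : |(if j = 0 then (-1:ℝ) else 1)| = 1 := by split <;> simp
    rw [h1, h2, one_mul, mul_one]
    exact hentry B hB j i
  -- Step 2 : separation
  have hNcard : (Fintype.card (Fin (n+1)) : ℝ) = (n+1 : ℝ) := by
    rw [Fintype.card_fin]; push_cast; ring
  have key : ∀ A ∈ H, ∀ B ∈ H, (∀ i j, |A i j - B i j| < δ) → A = B := by
    intro A hA B hB hsmall
    by_contra hne
    have hopB := hsub B hB.1
    have hBinvΓ : B⁻¹ ∈ Γ := hinv B hB.1
    have hMΓ : A * B⁻¹ ∈ Γ := hmul A hA.1 B⁻¹ hBinvΓ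
    have hBright : B * B⁻¹ = 1 := by
      rw [OPlus_inv_eq hopB.1]; exact OPlus_right_inv hopB.1
    have hBleft : B⁻¹ * B = 1 := by
      rw [OPlus_inv_eq hopB.1]; exact OPlus_left_inv hopB.1
    have hMne : A * B⁻¹ ≠ 1 := by
      intro h1
      apply hne
      calc A = A * (B⁻¹ * B) := by rw [hBleft, Matrix.mul_one]
      _ = (A * B⁻¹) * B := by rw [Matrix.mul_assoc]
      _ = B := by rw [h1, Matrix.one_mul]
    have hs := hsep _ hMΓ hMne
    have hMI : A * B⁻¹ - 1 = (A - B) * B⁻¹ := by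
      rw [Matrix.sub_mul, hBright]
    -- sup of entry differences
    have hne' : (Finset.univ : Finset (Fin (n+1) × Fin (n+1))).Nonempty :=
      ⟨(0,0), Finset.mem_univ _⟩
    set m0 := Finset.univ.sup' hne' (fun p : Fin (n+1) × Fin (n+1) => |A p.1 p.2 - B p.1 p.2|)
      with hm0def
    have hm0lt : m0 < δ := by
      rw [hm0def, Finset.sup'_lt_iff]
      exact fun p _ => hsmall p.1 p.2
    have hm0 : ∀ i j, |A i j - B i j| ≤ m0 := fun i j =>
      Finset.le_sup' (f := fun p : Fin (n+1) × Fin (n+1) => |A p.1 p.2 - B p.1 p.2|)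
        (Finset.mem_univ (i,j))
    have hm0nn : 0 ≤ m0 := le_trans (abs_nonneg _) (hm0 0 0)
    have hAB : opNorm (A - B) ≤ (Fintype.card (Fin (n+1))) * m0 :=
      opNorm_le_of_entry_le _ _ hm0nn (fun i j => by
        rw [Matrix.sub_apply]; exact hm0 i j)
    have hBi : opNorm (B⁻¹ : Matrix (Fin (n+1)) (Fin (n+1)) ℝ)
        ≤ (Fintype.card (Fin (n+1))) * κ :=
      opNorm_le_of_entry_le _ _ (le_of_lt hκ) (hinvent B hB)
    have hABnn : 0 ≤ opNorm (A - B) := norm_nonneg _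
    have hops : opNorm (A * B⁻¹ - 1) ≤ opNorm (A - B) * opNorm (B⁻¹ : Matrix (Fin (n+1)) (Fin (n+1)) ℝ) := by
      rw [hMI]; exact opNorm_mul_le _ _
    have hchain : c < c := by
      calc c ≤ opNorm (A * B⁻¹ - 1) := hs
      _ ≤ opNorm (A - B) * opNorm (B⁻¹ : Matrix (Fin (n+1)) (Fin (n+1)) ℝ) := hops
      _ ≤ ((Fintype.card (Fin (n+1))) * m0) * ((Fintype.card (Fin (n+1))) * κ) := by
          apply mul_le_mul hAB hBi (norm_nonneg _)
          positivity
      _ < ((Fintype.card (Fin (n+1))) * δ) * ((Fintype.card (Fin (n+1))) * κ) := by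
          apply mul_lt_mul_of_pos_right _ (by rw [hNcard]; positivity)
          apply mul_lt_mul_of_pos_left hm0lt (by rw [hNcard]; positivity)
      _ = c := by
          rw [hNcard, hδdef]
          field_simp
    exact lt_irrefl c hchain
  -- Step 3 : packing
  set k : ℕ := ⌊2*κ/δ⌋₊ with hkdef
  set ψ : Matrix (Fin (n+1)) (Fin (n+1)) ℝ → (Fin (n+1) → Fin (n+1) → Fin (k+1)) :=
    fun A i j => ⟨min ⌊(A i j + κ)/δ⌋₊ k, Nat.lt_succ_of_le (min_le_right _ _)⟩ with hψdef
  have hcollapse : ∀ A ∈ H, ∀ i j, (ψ A i j : ℕ) = ⌊(A i j + κ)/δ⌋₊ := by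
    intro A hA i j
    have habs := abs_le.mp (hentry A hA i j)
    have h1 : (A i j + κ)/δ ≤ 2*κ/δ := (div_le_div_iff_of_pos_right hδ).mpr (by linarith [habs.2])
    have h2 : ⌊(A i j + κ)/δ⌋₊ ≤ k := by
      rw [hkdef]; exact Nat.floor_mono h1
    show min ⌊(A i j + κ)/δ⌋₊ k = ⌊(A i j + κ)/δ⌋₊
    exact min_eq_left h2
  have hinj : Set.InjOn ψ H := by
    intro A hA B hB heq
    apply key A hA B hB
    intro i j
    have hfl : ⌊(A i j + κ)/δ⌋₊ = ⌊(B i j + κ)/δ⌋₊ := by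
      rw [← hcollapse A hA i j, ← hcollapse B hB i j, heq]
    have habsA := abs_le.mp (hentry A hA i j)
    have habsB := abs_le.mp (hentry B hB i j)
    have hAnn : 0 ≤ (A i j + κ)/δ := div_nonneg (by linarith [habsA.1]) (le_of_lt hδ)
    have hBnn : 0 ≤ (B i j + κ)/δ := div_nonneg (by linarith [habsB.1]) (le_of_lt hδ)
    have hA1 : (⌊(A i j + κ)/δ⌋₊ : ℝ) ≤ (A i j + κ)/δ := Nat.floor_le hAnn
    have hA2 : (A i j + κ)/δ < ⌊(A i j + κ)/δ⌋₊ + 1 := Nat.lt_floor_add_one _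
    have hB1 : (⌊(B i j + κ)/δ⌋₊ : ℝ) ≤ (B i j + κ)/δ := Nat.floor_le hBnn
    have hB2 : (B i j + κ)/δ < ⌊(B i j + κ)/δ⌋₊ + 1 := Nat.lt_floor_add_one _
    rw [hfl] at hA1 hA2
    have hdiff : |(A i j + κ)/δ - (B i j + κ)/δ| < 1 := by
      rw [abs_lt]; constructor <;> linarith
    have hrewrite : (A i j + κ)/δ - (B i j + κ)/δ = (A i j - B i j)/δ := by
      field_simp
      ring
    rw [hrewrite, abs_div, abs_of_pos hδ, div_lt_one hδ] at hdiff
    exact hdiff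
  have hfin : H.Finite := Set.Finite.of_finite_image (Set.toFinite _) hinj
  refine ⟨hfin, ?_⟩
  -- cardinality bound
  have hcard : Nat.card H ≤ (k+1) ^ ((n+1)^2) := by
    have h1 : Nat.card H = (ψ '' H).ncard := by
      rw [Nat.card_coe_set_eq, Set.ncard_image_of_injOn hinj]
    have h2 : (ψ '' H).ncard ≤ (Set.univ : Set (Fin (n+1) → Fin (n+1) → Fin (k+1))).ncard :=
      Set.ncard_le_ncard (Set.subset_univ _) (Set.toFinite _)
    have h3 : (Set.univ : Set (Fin (n+1) → Fin (n+1) → Fin (k+1))).ncard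
        = Fintype.card (Fin (n+1) → Fin (n+1) → Fin (k+1)) := by
      rw [Set.ncard_univ, Nat.card_eq_fintype_card]
    have h4 : Fintype.card (Fin (n+1) → Fin (n+1) → Fin (k+1)) = (k+1) ^ ((n+1)^2) := by
      rw [Fintype.card_fun, Fintype.card_fun, Fintype.card_fin, Fintype.card_fin,
        ← pow_mul, ← pow_two]
    rw [h1, ← h4]
    exact le_trans h2 (le_of_eq h3)
  have hk_real : ((k : ℝ) + 1) ≤ 2 * kappa r ^ 2 * (n + 1) ^ 2 / c + 1 := by
    have h1 : (k : ℝ) ≤ 2*κ/δ := by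
      rw [hkdef]; exact Nat.floor_le (by positivity)
    have h2 : 2*κ/δ = 2 * kappa r ^ 2 * ((n:ℝ) + 1) ^ 2 / c := by
      rw [hδdef, hκdef]
      field_simp
    rw [h2] at h1
    linarith
  calc (Nat.card H : ℝ) ≤ ((k+1 : ℕ) : ℝ) ^ ((n+1)^2) := by
        rw [show (((k+1 : ℕ) : ℝ) ^ ((n+1)^2)) = (((k+1)^((n+1)^2) : ℕ) : ℝ) by push_cast; ring]
        exact_mod_cast hcard
  _ ≤ (2 * kappa r ^ 2 * ((n:ℝ) + 1) ^ 2 / c + 1) ^ ((n+1)^2) := by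
        apply pow_le_pow_left₀ (by positivity)
        push_cast
        push_cast at hk_real
        linarith
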